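/- For CTL*: φ is satisfiable if and only if the single-variable formula φ* = σ(Θ ∧ φ') is satisfiable, where σ substitutes Bᵢ = EX Aᵢ (one-variable formulas built from the chain models) for each variable pᵢ, i = 1,...,n+1. -/

import Mathlib

/-- Serial Kripke models. -/
structure Kripke (S : Type) where
  rel : S → S → Prop
  serial : ∀ s, ∃ t, rel s t
  val : ℕ → S → Prop

def isPath {S : Type} (M : Kripke S) (π : ℕ → S) : Prop :=
  ∀ i, M.rel (π i) (π (i + 1))

mutual
/-- CTL* state formulas. -/
inductive SF : Type where
  | var : ℕ → SF
  | bot : SF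
  | imp : SF → SF → SF
  | all : PF → SF
/-- CTL* path formulas. -/
inductive PF : Type where
  | st : SF → PF
  | imp : PF → PF → PF
  | unt : PF → PF → PF
  | next : PF → PF
end

def SF.neg (φ : SF) : SF := .imp φ .bot
def PF.neg (ϑ : PF) : PF := .imp ϑ (.st .bot)
def PF.top : PF := PF.neg (.st .bot)
/-- □ϑ = ¬(⊤ U ¬ϑ). -/
def PF.box (ϑ : PF) : PF := PF.neg (.unt PF.top (PF.neg ϑ))
/-- ∃ϑ = ¬∀¬ϑ. -/
def SF.exa (ϑ : PF) : SF := SF.neg (.all (PF.neg ϑ))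
def SF.conj (φ ψ : SF) : SF := SF.neg (.imp φ (SF.neg ψ))
def SF.iffc (φ ψ : SF) : SF := SF.conj (.imp φ ψ) (.imp ψ φ)
/-- AG φ = ∀□φ. -/
def SF.ag (φ : SF) : SF := .all (PF.box (.st φ))
/-- EX φ = ∃Xφ. -/
def SF.ex (φ : SF) : SF := SF.exa (.next (.st φ))

mutual
/-- Satisfaction of state formulas at states. -/
def ssat {S : Type} (M : Kripke S) : SF → S → Prop
  | .var n, s => M.val n s
  | .bot, _ => False
  | .imp a b, s => ssat M a s → ssat M b s
  | .all ϑ, s => ∀ π : ℕ → S, isPath M π → π 0 = s → psat M ϑ π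
/-- Satisfaction of path formulas on paths. -/
def psat {S : Type} (M : Kripke S) : PF → (ℕ → S) → Prop
  | .st φ, π => ssat M φ (π 0)
  | .imp a b, π => psat M a π → psat M b π
  | .unt a b, π => ∃ i, psat M b (fun j => π (i + j)) ∧
      ∀ j, j < i → psat M a (fun l => π (j + l))
  | .next a, π => psat M a (fun j => π (j + 1))
end

def ssatisfiable (φ : SF) : Prop := ∃ (S : Type) (M : Kripke S) (s : S), ssat M φ s

mutual
def soccurs (q : ℕ) : SF → Prop
  | .var n => n = q
  | .bot => False
  | .imp a b => soccurs q a ∨ soccurs q b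
  | .all ϑ => poccurs q ϑ
def poccurs (q : ℕ) : PF → Prop
  | .st φ => soccurs q φ
  | .imp a b => poccurs q a ∨ poccurs q b
  | .unt a b => poccurs q a ∨ poccurs q b
  | .next a => poccurs q a
end

mutual
/-- The path-relativizing translation ·' with guard variable q:
(∀α)' = ∀(□q → α'), homomorphic elsewhere. -/
def srel (q : ℕ) : SF → SF
  | .var n => .var n
  | .bot => .bot
  | .imp a b => .imp (srel q a) (srel q b)
  | .all ϑ => .all (.imp (PF.box (.st (.var q))) (prel q ϑ))
def prel (q : ℕ) : PF → PF
  | .st φ => .st (srel q φ)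
  | .imp a b => .imp (prel q a) (prel q b)
  | .unt a b => .unt (prel q a) (prel q b)
  | .next a => .next (prel q a)
end

/-- Θ = q ∧ AG(EX q ↔ q). -/
def ThetaS (q : ℕ) : SF :=
  SF.conj (.var q) (SF.ag (SF.iffc (SF.ex (.var q)) (.var q)))

/-- χ₀ = ∀□p, χ_{k+1} = p ∧ EX(¬p ∧ EX χ_k); p is var 0. -/
def chiS : ℕ → SF
  | 0 => SF.ag (.var 0)
  | k + 1 => SF.conj (.var 0) (SF.ex (SF.conj (SF.neg (.var 0)) (SF.ex (chiS k))))

/-- A_m = χ_m ∧ EX AG ¬p. -/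
def AformS (m : ℕ) : SF := SF.conj (chiS m) (SF.ex (SF.ag (SF.neg (.var 0))))

/-- B_m = EX A_m. -/
def BformS (m : ℕ) : SF := SF.ex (AformS m)

mutual
/-- The substitution σ : pᵢ ↦ Bᵢ for 1 ≤ i ≤ n+1. -/
def sigmaS (n : ℕ) : SF → SF
  | .var i => if 1 ≤ i ∧ i ≤ n + 1 then BformS i else .var i
  | .bot => .bot
  | .imp a b => .imp (sigmaS n a) (sigmaS n b)
  | .all ϑ => .all (sigmaP n ϑ)
def sigmaP (n : ℕ) : PF → PF
  | .st φ => .st (sigmaS n φ)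
  | .imp a b => .imp (sigmaP n a) (sigmaP n b)
  | .unt a b => .unt (sigmaP n a) (sigmaP n b)
  | .next a => .next (sigmaP n a)
end

open Classical in
noncomputable def pathFrom {S : Type} (M : Kripke S) (s : S) : ℕ → S
  | 0 => s
  | k + 1 => Classical.choose (M.serial (pathFrom M s k))

theorem pathFrom_isPath {S : Type} (M : Kripke S) (s : S) : isPath M (pathFrom M s) :=
  fun _ => Classical.choose_spec (M.serial _)

noncomputable def consPath {S : Type} (M : Kripke S) (s t : S) : ℕ → S
  | 0 => s
  | _k + 1 => pathFrom M t _k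

theorem consPath_isPath {S : Type} (M : Kripke S) {s t : S} (h : M.rel s t) :
    isPath M (consPath M s t) := by
  intro i
  cases i with
  | zero => exact h
  | succ k => exact pathFrom_isPath M t k

theorem ssat_neg {S : Type} (M : Kripke S) (φ : SF) (s : S) :
    ssat M (SF.neg φ) s ↔ ¬ ssat M φ s := by
  simp [SF.neg, ssat]

theorem ssat_imp {S : Type} (M : Kripke S) (a b : SF) (s : S) :
    ssat M (.imp a b) s ↔ (ssat M a s → ssat M b s) := by rw [ssat]

theorem ssat_conj {S : Type} (M : Kripke S) (φ ψ : SF) (s : S) :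
    ssat M (SF.conj φ ψ) s ↔ (ssat M φ s ∧ ssat M ψ s) := by
  simp [SF.conj, SF.neg, ssat]

theorem ssat_ex {S : Type} (M : Kripke S) (φ : SF) (s : S) :
    ssat M (SF.ex φ) s ↔ ∃ t, M.rel s t ∧ ssat M φ t := by
  constructor
  · intro h
    by_contra h'
    push_neg at h'
    simp only [SF.ex, SF.exa, SF.neg, PF.neg, ssat, psat] at h
    apply h
    intro π hπ h0 hφ
    exact h' (π 1) (h0 ▸ hπ 0) hφ
  · rintro ⟨t, hrel, hφ⟩
    simp only [SF.ex, SF.exa, SF.neg, PF.neg, ssat, psat]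
    intro h
    exact h (consPath M s t) (consPath_isPath M hrel) rfl hφ

theorem psat_box_st {S : Type} (M : Kripke S) (φ : SF) (π : ℕ → S) :
    psat M (PF.box (.st φ)) π ↔ ∀ i, ssat M φ (π i) := by
  simp [PF.box, PF.neg, PF.top, psat, ssat]

theorem reach_of_path {S : Type} {M : Kripke S} {π : ℕ → S} (hπ : isPath M π) (i : ℕ) :
    Relation.ReflTransGen M.rel (π 0) (π i) := by
  induction i with
  | zero => exact .refl
  | succ k ih => exact ih.tail (hπ k)

theorem path_of_reach {S : Type} {M : Kripke S} {s t : S}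
    (h : Relation.ReflTransGen M.rel s t) :
    ∃ π, isPath M π ∧ π 0 = s ∧ ∃ i, π i = t := by
  induction h with
  | refl => exact ⟨pathFrom M s, pathFrom_isPath M s, rfl, 0, rfl⟩
  | @tail t u _hst hrel ih =>
    obtain ⟨π, hπ, h0, i, hi⟩ := ih
    refine ⟨fun j => if j ≤ i then π j else pathFrom M u (j - i - 1), ?_, ?_, i + 1, ?_⟩
    · intro j
      rcases lt_trichotomy j i with hj | hj | hj
      · have h1 : j ≤ i := hj.le
        have h2 : j + 1 ≤ i := hj
        simp only [h1, h2, if_pos]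
        exact hπ j
      · subst hj
        simp only [le_refl, if_pos, Nat.not_succ_le_self, if_neg]
        simpa [hi, pathFrom] using hrel
      · have h1 : ¬ j ≤ i := not_le.mpr hj
        have h2 : ¬ j + 1 ≤ i := by omega
        simp only [h1, h2, if_neg]
        have h3 := pathFrom_isPath M u (j - i - 1)
        have he : j - i - 1 + 1 = j + 1 - i - 1 := by omega
        rwa [he] at h3
    · simp [h0]
    · simp [pathFrom]

theorem ssat_ag {S : Type} (M : Kripke S) (φ : SF) (s : S) :
    ssat M (SF.ag φ) s ↔ ∀ t, Relation.ReflTransGen M.rel s t → ssat M φ t := by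
  constructor
  · intro h t hreach
    obtain ⟨π, hπ, h0, i, hi⟩ := path_of_reach hreach
    have h2 : psat M (PF.box (.st φ)) π := h π hπ h0
    rw [psat_box_st] at h2
    exact hi ▸ h2 i
  · intro h π hπ h0
    rw [psat_box_st]
    intro i
    exact h _ (h0 ▸ reach_of_path hπ i)
/-! ### Substitution lemma -/

mutual
theorem subst_s {S : Type} (n : ℕ) (M M₂ : Kripke S) (hrel : M₂.rel = M.rel)
    (hval : ∀ i s, M₂.val i s ↔
      ssat M (if 1 ≤ i ∧ i ≤ n + 1 then BformS i else .var i) s) :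
    ∀ (φ : SF) (s : S), ssat M₂ φ s ↔ ssat M (sigmaS n φ) s
  | .var i, s => by
      simp only [ssat, sigmaS]
      rw [hval i s]
  | .bot, s => by simp [ssat, sigmaS]
  | .imp a b, s => by
      simp only [ssat, sigmaS]
      rw [subst_s n M M₂ hrel hval a s, subst_s n M M₂ hrel hval b s]
  | .all ϑ, s => by
      simp only [ssat, sigmaS, isPath, hrel]
      exact forall_congr' fun π => imp_congr Iff.rfl (imp_congr Iff.rfl
        (subst_p n M M₂ hrel hval ϑ π))

theorem subst_p {S : Type} (n : ℕ) (M M₂ : Kripke S) (hrel : M₂.rel = M.rel)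
    (hval : ∀ i s, M₂.val i s ↔
      ssat M (if 1 ≤ i ∧ i ≤ n + 1 then BformS i else .var i) s) :
    ∀ (ϑ : PF) (π : ℕ → S), psat M₂ ϑ π ↔ psat M (sigmaP n ϑ) π
  | .st φ, π => by
      simp only [psat, sigmaP]
      exact subst_s n M M₂ hrel hval φ (π 0)
  | .imp a b, π => by
      simp only [psat, sigmaP]
      rw [subst_p n M M₂ hrel hval a π, subst_p n M M₂ hrel hval b π]
  | .unt a b, π => by
      simp only [psat, sigmaP]
      exact exists_congr fun i => and_congr (subst_p n M M₂ hrel hval b _)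
        (forall_congr' fun j => imp_congr Iff.rfl (subst_p n M M₂ hrel hval a _))
  | .next a, π => by
      simp only [psat, sigmaP]
      exact subst_p n M M₂ hrel hval a _
end

/-! ### Occurrence-restricted transfer along a functional bisimulation -/

theorem soccurs_imp {q : ℕ} {a b : SF} :
    soccurs q (.imp a b) ↔ soccurs q a ∨ soccurs q b := by rw [soccurs]
theorem soccurs_all {q : ℕ} {ϑ : PF} : soccurs q (.all ϑ) ↔ poccurs q ϑ := by rw [soccurs]
theorem poccurs_st {q : ℕ} {φ : SF} : poccurs q (.st φ) ↔ soccurs q φ := by rw [poccurs]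
theorem poccurs_imp {q : ℕ} {a b : PF} :
    poccurs q (.imp a b) ↔ poccurs q a ∨ poccurs q b := by rw [poccurs]
theorem poccurs_unt {q : ℕ} {a b : PF} :
    poccurs q (.unt a b) ↔ poccurs q a ∨ poccurs q b := by rw [poccurs]
theorem poccurs_next {q : ℕ} {a : PF} : poccurs q (.next a) ↔ poccurs q a := by rw [poccurs]

noncomputable def liftAux {S₁ S₂ : Type} (M₁ : Kripke S₁) (M₂ : Kripke S₂) (f : S₁ → S₂)
    (g : ∀ (s : S₁) (u : S₂), M₂.rel (f s) u → {t : S₁ // M₁.rel s t ∧ f t = u})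
    (s : S₁) (ρ : ℕ → S₂) (hρ : isPath M₂ ρ) (h0 : ρ 0 = f s) :
    (k : ℕ) → {t : S₁ // f t = ρ k}
  | 0 => ⟨s, h0.symm⟩
  | k + 1 =>
    let p := liftAux M₁ M₂ f g s ρ hρ h0 k
    let t := g p.1 (ρ (k + 1)) (by rw [p.2]; exact hρ k)
    ⟨t.1, t.2.2⟩

theorem liftAux_rel {S₁ S₂ : Type} (M₁ : Kripke S₁) (M₂ : Kripke S₂) (f : S₁ → S₂)
    (g : ∀ (s : S₁) (u : S₂), M₂.rel (f s) u → {t : S₁ // M₁.rel s t ∧ f t = u})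
    (s : S₁) (ρ : ℕ → S₂) (hρ : isPath M₂ ρ) (h0 : ρ 0 = f s) (k : ℕ) :
    M₁.rel (liftAux M₁ M₂ f g s ρ hρ h0 k).1 (liftAux M₁ M₂ f g s ρ hρ h0 (k + 1)).1 := by
  conv_rhs => rw [liftAux]
  exact (g _ _ _).2.1

theorem lift_path {S₁ S₂ : Type} {M₁ : Kripke S₁} {M₂ : Kripke S₂} {f : S₁ → S₂}
    (hback : ∀ s u, M₂.rel (f s) u → ∃ t, M₁.rel s t ∧ f t = u)
    (s : S₁) (ρ : ℕ → S₂) (hρ : isPath M₂ ρ) (h0 : ρ 0 = f s) :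
    ∃ π : ℕ → S₁, π 0 = s ∧ isPath M₁ π ∧ ∀ k, f (π k) = ρ k := by
  have g : ∀ (s : S₁) (u : S₂), M₂.rel (f s) u → {t : S₁ // M₁.rel s t ∧ f t = u} :=
    fun s u h => ⟨Classical.choose (hback s u h), Classical.choose_spec (hback s u h)⟩
  exact ⟨fun k => (liftAux M₁ M₂ f g s ρ hρ h0 k).1, rfl,
    fun k => liftAux_rel M₁ M₂ f g s ρ hρ h0 k,
    fun k => (liftAux M₁ M₂ f g s ρ hρ h0 k).2⟩
mutual
theorem iso_s {S₁ S₂ : Type} (M₁ : Kripke S₁) (M₂ : Kripke S₂) (f : S₁ → S₂)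
    (hfwd : ∀ s t, M₁.rel s t → M₂.rel (f s) (f t))
    (hback : ∀ s u, M₂.rel (f s) u → ∃ t, M₁.rel s t ∧ f t = u) :
    ∀ (φ : SF), (∀ i, soccurs i φ → ∀ s, M₁.val i s ↔ M₂.val i (f s)) →
      ∀ s, ssat M₁ φ s ↔ ssat M₂ φ (f s)
  | .var i, h, s => by
      simp only [ssat]
      exact h i (by rw [soccurs]) s
  | .bot, _, s => by simp [ssat]
  | .imp a b, h, s => by
      simp only [ssat]
      rw [iso_s M₁ M₂ f hfwd hback a (fun i hi => h i (soccurs_imp.mpr (Or.inl hi))) s,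
        iso_s M₁ M₂ f hfwd hback b (fun i hi => h i (soccurs_imp.mpr (Or.inr hi))) s]
  | .all ϑ, h, s => by
      have hϑ : ∀ i, poccurs i ϑ → ∀ s, M₁.val i s ↔ M₂.val i (f s) :=
        fun i hi => h i (soccurs_all.mpr hi)
      simp only [ssat]
      constructor
      · intro h2 ρ hρ h0
        obtain ⟨π, hπ0, hπ, hf⟩ := lift_path hback s ρ hρ h0
        have h3 := (iso_p M₁ M₂ f hfwd hback ϑ hϑ π hπ).mp (h2 π hπ hπ0)
        have he : (fun k => f (π k)) = ρ := funext hf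
        rwa [he] at h3
      · intro h2 π hπ h0
        exact (iso_p M₁ M₂ f hfwd hback ϑ hϑ π hπ).mpr
          (h2 (fun k => f (π k)) (fun i => hfwd _ _ (hπ i)) (by simpa using congrArg f h0))

theorem iso_p {S₁ S₂ : Type} (M₁ : Kripke S₁) (M₂ : Kripke S₂) (f : S₁ → S₂)
    (hfwd : ∀ s t, M₁.rel s t → M₂.rel (f s) (f t))
    (hback : ∀ s u, M₂.rel (f s) u → ∃ t, M₁.rel s t ∧ f t = u) :
    ∀ (ϑ : PF), (∀ i, poccurs i ϑ → ∀ s, M₁.val i s ↔ M₂.val i (f s)) →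
      ∀ π, isPath M₁ π → (psat M₁ ϑ π ↔ psat M₂ ϑ (fun k => f (π k)))
  | .st φ, h, π, _ => by
      simp only [psat]
      exact iso_s M₁ M₂ f hfwd hback φ (fun i hi => h i (poccurs_st.mpr hi)) (π 0)
  | .imp a b, h, π, hπ => by
      simp only [psat]
      rw [iso_p M₁ M₂ f hfwd hback a (fun i hi => h i (poccurs_imp.mpr (Or.inl hi))) π hπ,
        iso_p M₁ M₂ f hfwd hback b (fun i hi => h i (poccurs_imp.mpr (Or.inr hi))) π hπ]
  | .unt a b, h, π, hπ => by
      simp only [psat]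
      exact exists_congr fun i => and_congr
        (iso_p M₁ M₂ f hfwd hback b (fun i hi => h i (poccurs_unt.mpr (Or.inr hi)))
          (fun j => π (i + j)) (fun j => hπ (i + j)))
        (forall_congr' fun j => imp_congr Iff.rfl
          (iso_p M₁ M₂ f hfwd hback a (fun i hi => h i (poccurs_unt.mpr (Or.inl hi)))
            (fun l => π (j + l)) (fun l => hπ (j + l))))
  | .next a, h, π, hπ => by
      simp only [psat]
      exact iso_p M₁ M₂ f hfwd hback a (fun i hi => h i (poccurs_next.mpr hi))
        (fun j => π (j + 1)) (fun j => hπ (j + 1))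
end
def subModel {S : Type} (M : Kripke S) (Q : S → Prop)
    (hser : ∀ s, Q s → ∃ t, Q t ∧ M.rel s t) : Kripke {s // Q s} where
  rel a b := M.rel a.1 b.1
  serial a := by
    obtain ⟨t, ht, hr⟩ := hser a.1 a.2
    exact ⟨⟨t, ht⟩, hr⟩
  val i a := M.val i a.1

mutual
theorem rel_s {S : Type} (M : Kripke S) (q : ℕ) (Q : S → Prop)
    (hser : ∀ s, Q s → ∃ t, Q t ∧ M.rel s t)
    (hQq : ∀ s, Q s → M.val q s)
    (hcl : ∀ s t, Q s → M.rel s t → M.val q t → Q t) :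
    ∀ (φ : SF) (s : S) (hs : Q s),
      ssat (subModel M Q hser) φ ⟨s, hs⟩ ↔ ssat M (srel q φ) s
  | .var i, s, hs => by simp only [ssat, srel, subModel]
  | .bot, s, hs => by simp [ssat, srel]
  | .imp a b, s, hs => by
      simp only [ssat, srel]
      rw [rel_s M q Q hser hQq hcl a s hs, rel_s M q Q hser hQq hcl b s hs]
  | .all ϑ, s, hs => by
      simp only [ssat, srel, psat]
      constructor
      · intro h ρ hρ h0 hbox
        have hbox' : ∀ i, M.val q (ρ i) := by
          intro i
          by_contra hc
          exact hbox ⟨i, fun hv => hc hv, fun j _ hf => hf⟩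
        have hQ : ∀ i, Q (ρ i) := by
          intro i
          induction i with
          | zero => exact h0 ▸ hs
          | succ k ih => exact hcl _ _ ih (hρ k) (hbox' (k + 1))
        have hπ' : isPath (subModel M Q hser) (fun i => ⟨ρ i, hQ i⟩) := fun i => hρ i
        have h2 := h (fun i => ⟨ρ i, hQ i⟩) hπ' (Subtype.ext h0)
        exact (rel_p M q Q hser hQq hcl ϑ (fun i => ⟨ρ i, hQ i⟩)).mp h2
      · intro h π hπ h0
        apply (rel_p M q Q hser hQq hcl ϑ π).mpr
        apply h (fun i => (π i).1) hπ (congrArg Subtype.val h0)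
        rintro ⟨i, h1, -⟩
        exact h1 (hQq _ (π (i + 0)).2)

theorem rel_p {S : Type} (M : Kripke S) (q : ℕ) (Q : S → Prop)
    (hser : ∀ s, Q s → ∃ t, Q t ∧ M.rel s t)
    (hQq : ∀ s, Q s → M.val q s)
    (hcl : ∀ s t, Q s → M.rel s t → M.val q t → Q t) :
    ∀ (ϑ : PF) (π : ℕ → {s // Q s}),
      psat (subModel M Q hser) ϑ π ↔ psat M (prel q ϑ) (fun i => (π i).1)
  | .st φ, π => by
      simp only [psat, prel]
      exact rel_s M q Q hser hQq hcl φ (π 0).1 (π 0).2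
  | .imp a b, π => by
      simp only [psat, prel]
      rw [rel_p M q Q hser hQq hcl a π, rel_p M q Q hser hQq hcl b π]
  | .unt a b, π => by
      simp only [psat, prel]
      exact exists_congr fun i => and_congr (rel_p M q Q hser hQq hcl b _)
        (forall_congr' fun j => imp_congr Iff.rfl (rel_p M q Q hser hQq hcl a _))
  | .next a, π => by
      simp only [psat, prel]
      exact rel_p M q Q hser hQq hcl a _
end
theorem ssat_var {S : Type} (M : Kripke S) (i : ℕ) (s : S) :
    ssat M (.var i) s ↔ M.val i s := by rw [ssat]

theorem backward_dir (n : ℕ) (φ : SF) :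
    ssatisfiable (sigmaS n (SF.conj (ThetaS (n + 1)) (srel (n + 1) φ))) → ssatisfiable φ := by
  rintro ⟨S₁, M₁, x₀, hsat⟩
  set M₂ : Kripke S₁ :=
    ⟨M₁.rel, M₁.serial, fun i s =>
      ssat M₁ (if 1 ≤ i ∧ i ≤ n + 1 then BformS i else .var i) s⟩ with hM₂
  have hsub := subst_s n M₁ M₂ rfl (fun i s => Iff.rfl)
  have h1 : ssat M₂ (SF.conj (ThetaS (n + 1)) (srel (n + 1) φ)) x₀ :=
    (hsub _ x₀).mpr hsat
  rw [ssat_conj] at h1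
  obtain ⟨hΘ, hφ'⟩ := h1
  rw [ThetaS, ssat_conj, ssat_var] at hΘ
  obtain ⟨hq0, hAG⟩ := hΘ
  set q := n + 1 with hqdef
  set Q : S₁ → Prop :=
    fun x => M₂.val q x ∧ Relation.ReflTransGen M₂.rel x₀ x with hQdef
  have hIFF : ∀ t, Relation.ReflTransGen M₂.rel x₀ t →
      (ssat M₂ (SF.ex (.var q)) t ↔ M₂.val q t) := by
    intro t ht
    have h3 := (ssat_ag M₂ _ x₀).mp hAG t ht
    rw [SF.iffc, ssat_conj, ssat_imp, ssat_imp, ssat_var] at h3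
    exact ⟨h3.1, h3.2⟩
  have hser : ∀ s, Q s → ∃ t, Q t ∧ M₂.rel s t := by
    rintro x ⟨hq, hr⟩
    have hex : ssat M₂ (SF.ex (.var q)) x := (hIFF x hr).mpr hq
    rw [ssat_ex] at hex
    obtain ⟨t, hrel, hqt⟩ := hex
    rw [ssat_var] at hqt
    exact ⟨t, ⟨hqt, hr.tail hrel⟩, hrel⟩
  have hQq : ∀ s, Q s → M₂.val q s := fun s hs => hs.1
  have hcl : ∀ s t, Q s → M₂.rel s t → M₂.val q t → Q t :=
    fun s t hQ hrel hq => ⟨hq, hQ.2.tail hrel⟩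
  have hx₀ : Q x₀ := ⟨hq0, .refl⟩
  have := (rel_s M₂ q Q hser hQq hcl φ x₀ hx₀).mpr hφ'
  exact ⟨_, _, _, this⟩
def starRel {S : Type} (M : Kripke S) (n : ℕ) : S ⊕ ℕ × ℕ → S ⊕ ℕ × ℕ → Prop
  | .inl s, .inl t => M.rel s t
  | .inl s, .inr (i, j) => j = 0 ∧ 1 ≤ i ∧ i ≤ n + 1 ∧ (i = n + 1 ∨ M.val i s)
  | .inr _, .inl _ => False
  | .inr (m, j), .inr (m', j') =>
      m' = m ∧ ((j < 2 * m ∧ j' = j + 1) ∨ (2 * m ≤ j ∧ j' = j) ∨ (j = 0 ∧ j' = 2 * m + 1))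

def starVal {S : Type} : ℕ → S ⊕ ℕ × ℕ → Prop
  | _, .inl _ => False
  | i, .inr (m, j) => i = 0 ∧ j ≤ 2 * m ∧ j % 2 = 0

def Mstar {S : Type} (M : Kripke S) (n : ℕ) : Kripke (S ⊕ ℕ × ℕ) where
  rel := starRel M n
  serial := by
    rintro (s | ⟨m, j⟩)
    · obtain ⟨t, ht⟩ := M.serial s
      exact ⟨.inl t, ht⟩
    · by_cases h : j < 2 * m
      · exact ⟨.inr (m, j + 1), rfl, Or.inl ⟨h, rfl⟩⟩
      · exact ⟨.inr (m, j), rfl, Or.inr (Or.inl ⟨not_lt.mp h, rfl⟩)⟩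
  val := starVal

theorem succ_inl {S : Type} (M : Kripke S) (n : ℕ) (s : S) (y : S ⊕ ℕ × ℕ) :
    starRel M n (.inl s) y ↔
      (∃ t, y = .inl t ∧ M.rel s t) ∨
      (∃ i, y = .inr (i, 0) ∧ 1 ≤ i ∧ i ≤ n + 1 ∧ (i = n + 1 ∨ M.val i s)) := by
  rcases y with t | ⟨i, j⟩
  · simp [starRel]
  · simp only [starRel]
    constructor
    · rintro ⟨rfl, h⟩
      exact Or.inr ⟨i, rfl, h⟩
    · rintro (⟨t, h, -⟩ | ⟨i', h, hh⟩)
      · exact absurd h (by simp)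
      · obtain ⟨rfl, rfl⟩ : i = i' ∧ j = 0 := by
          simpa [Prod.ext_iff, eq_comm] using h
        exact ⟨rfl, hh⟩

theorem succ_inr {S : Type} (M : Kripke S) (n : ℕ) (m j : ℕ) (y : S ⊕ ℕ × ℕ) :
    starRel M n (.inr (m, j)) y ↔
      (j < 2 * m ∧ y = .inr (m, j + 1)) ∨ (2 * m ≤ j ∧ y = .inr (m, j)) ∨
      (j = 0 ∧ y = .inr (m, 2 * m + 1)) := by
  rcases y with t | ⟨m', j'⟩
  · simp [starRel]
  · simp only [starRel, Sum.inr.injEq, Prod.mk.injEq]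
    omega

theorem val0_iff {S : Type} (M : Kripke S) (n : ℕ) (x : S ⊕ ℕ × ℕ) :
    (Mstar M n).val 0 x ↔ ∃ m j, x = .inr (m, j) ∧ j ≤ 2 * m ∧ j % 2 = 0 := by
  rcases x with s | ⟨m, j⟩
  · simp [Mstar, starVal]
  · simp only [Mstar, starVal, Sum.inr.injEq, Prod.mk.injEq, true_and]
    constructor
    · exact fun h => ⟨m, j, ⟨rfl, rfl⟩, h⟩
    · rintro ⟨m', j', ⟨rfl, rfl⟩, h⟩
      exact h

theorem agnp_iff {S : Type} (M : Kripke S) (n : ℕ) (x : S ⊕ ℕ × ℕ) :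
    ssat (Mstar M n) (SF.ag (SF.neg (.var 0))) x ↔
      ∃ m j, x = .inr (m, j) ∧ 2 * m < j := by
  rw [ssat_ag]
  constructor
  · intro h
    rcases x with s | ⟨m, j⟩
    · exfalso
      have hstep : (Mstar M n).rel (.inl s) (.inr (n + 1, 0)) :=
        (succ_inl M n s (.inr (n + 1, 0))).mpr
          (Or.inr ⟨n + 1, rfl, by omega, le_rfl, Or.inl rfl⟩)
      have h2 := h _ (Relation.ReflTransGen.refl.tail hstep)
      rw [ssat_neg, ssat_var, val0_iff] at h2
      exact h2 ⟨n + 1, 0, rfl, by omega, by omega⟩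
    · refine ⟨m, j, rfl, ?_⟩
      by_contra hj
      push_neg at hj
      by_cases hev : j % 2 = 0
      · have h2 := h _ Relation.ReflTransGen.refl
        rw [ssat_neg, ssat_var, val0_iff] at h2
        exact h2 ⟨m, j, rfl, hj, hev⟩
      · have hstep : (Mstar M n).rel (.inr (m, j)) (.inr (m, j + 1)) :=
          (succ_inr M n m j (.inr (m, j + 1))).mpr (Or.inl ⟨by omega, rfl⟩)
        have h2 := h _ (Relation.ReflTransGen.refl.tail hstep)
        rw [ssat_neg, ssat_var, val0_iff] at h2
        exact h2 ⟨m, j + 1, rfl, by omega, by omega⟩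
  · rintro ⟨m, j, rfl, hj⟩ t ht
    have hself : ∀ y, Relation.ReflTransGen (Mstar M n).rel (.inr (m, j)) y →
        y = .inr (m, j) := by
      intro y hy
      induction hy with
      | refl => rfl
      | tail _ hrel ih =>
        subst ih
        rename_i z _
        have := (succ_inr M n m j z).mp hrel
        rcases this with ⟨h1, -⟩ | ⟨-, h2⟩ | ⟨h3, -⟩
        · omega
        · exact h2
        · omega
    rw [hself t ht, ssat_neg, ssat_var, val0_iff]
    rintro ⟨m', j', h, hle, -⟩
    obtain ⟨rfl, rfl⟩ : m = m' ∧ j = j' := by simpa [Prod.ext_iff] using h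
    omega
theorem chi_iff {S : Type} (M : Kripke S) (n : ℕ) :
    ∀ (k : ℕ) (x : S ⊕ ℕ × ℕ), ssat (Mstar M n) (chiS k) x ↔
      ∃ m j, x = .inr (m, j) ∧ j + 2 * k = 2 * m ∧ j % 2 = 0 ∧ 1 ≤ m := by
  intro k
  induction k with
  | zero =>
    intro x
    rw [chiS, ssat_ag]
    constructor
    · intro h
      have h0 := h x Relation.ReflTransGen.refl
      rw [ssat_var, val0_iff] at h0
      obtain ⟨m, j, rfl, hle, hev⟩ := h0
      have hj : j = 2 * m := by
        by_contra hne
        have hlt : j < 2 * m := by omega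
        have hstep : (Mstar M n).rel (.inr (m, j)) (.inr (m, j + 1)) :=
          (succ_inr M n m j _).mpr (Or.inl ⟨hlt, rfl⟩)
        have h1 := h _ (Relation.ReflTransGen.refl.tail hstep)
        rw [ssat_var, val0_iff] at h1
        obtain ⟨m', j', he, -, hev'⟩ := h1
        obtain ⟨rfl, rfl⟩ : m = m' ∧ j + 1 = j' := by simpa [Prod.ext_iff] using he
        omega
      subst hj
      have hm : 1 ≤ m := by
        by_contra hm
        have hm0 : m = 0 := by omega
        subst hm0
        have hstep : (Mstar M n).rel (.inr (0, 0)) (.inr (0, 1)) :=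
          (succ_inr M n 0 0 _).mpr (Or.inr (Or.inr ⟨rfl, rfl⟩))
        have h1 := h _ (Relation.ReflTransGen.refl.tail hstep)
        rw [ssat_var, val0_iff] at h1
        obtain ⟨m', j', he, hle', hev'⟩ := h1
        obtain ⟨rfl, rfl⟩ : 0 = m' ∧ 1 = j' := by simpa [Prod.ext_iff] using he
        omega
      exact ⟨m, 2 * m, rfl, by omega, by omega, hm⟩
    · rintro ⟨m, j, rfl, hj, hev, hm⟩ t ht
      have hj' : j = 2 * m := by omega
      subst hj'
      have hself : ∀ y, Relation.ReflTransGen (Mstar M n).rel (.inr (m, 2 * m)) y →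
          y = .inr (m, 2 * m) := by
        intro y hy
        induction hy with
        | refl => rfl
        | tail _ hrel ih =>
          subst ih
          rename_i z _
          rcases (succ_inr M n m (2 * m) z).mp hrel with ⟨h1, -⟩ | ⟨-, h2⟩ | ⟨h3, -⟩
          · omega
          · exact h2
          · omega
      rw [hself t ht, ssat_var, val0_iff]
      exact ⟨m, 2 * m, rfl, le_rfl, by omega⟩
  | succ k ih =>
    intro x
    rw [chiS, ssat_conj, ssat_var, ssat_ex]
    constructor
    · rintro ⟨h0, u, hrel, hu⟩
      rw [ssat_conj, ssat_neg, ssat_var, ssat_ex] at hu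
      obtain ⟨hnv, v, hrel2, hv⟩ := hu
      rw [ih] at hv
      obtain ⟨mv, jv, rfl, hjv, hevv, hmv⟩ := hv
      rw [val0_iff] at h0
      obtain ⟨m, j, rfl, hle, hev⟩ := h0
      rw [val0_iff] at hnv
      refine ⟨m, j, rfl, ?_, hev, ?_⟩ <;>
      · rcases (succ_inr M n m j u).mp hrel with ⟨h1, rfl⟩ | ⟨h1, rfl⟩ | ⟨h1, rfl⟩
        · rcases (succ_inr M n m (j + 1) (Sum.inr (mv, jv))).mp hrel2 with ⟨h2, he⟩ | ⟨h2, he⟩ | ⟨h2, he⟩ <;>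
          · simp only [Sum.inr.injEq, Prod.mk.injEq] at he
            omega
        · exact absurd ⟨m, j, rfl, hle, hev⟩ hnv
        · rcases (succ_inr M n m (2 * m + 1) (Sum.inr (mv, jv))).mp hrel2 with ⟨h2, he⟩ | ⟨h2, he⟩ | ⟨h2, he⟩ <;>
          · simp only [Sum.inr.injEq, Prod.mk.injEq] at he
            omega
    · rintro ⟨m, j, rfl, hj, hev, hm⟩
      refine ⟨?_, .inr (m, j + 1), (succ_inr M n m j _).mpr (Or.inl ⟨by omega, rfl⟩), ?_⟩
      · rw [val0_iff]
        exact ⟨m, j, rfl, by omega, hev⟩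
      · rw [ssat_conj, ssat_neg, ssat_var, ssat_ex]
        refine ⟨?_, .inr (m, j + 2),
          (succ_inr M n m (j + 1) _).mpr (Or.inl ⟨by omega, rfl⟩), ?_⟩
        · rw [val0_iff]
          rintro ⟨m', j', he, -, hev'⟩
          obtain ⟨rfl, rfl⟩ : m = m' ∧ j + 1 = j' := by simpa [Prod.ext_iff] using he
          omega
        · rw [ih]
          exact ⟨m, j + 2, rfl, by omega, by omega, hm⟩

theorem aform_iff {S : Type} (M : Kripke S) (n : ℕ) (i : ℕ) (x : S ⊕ ℕ × ℕ) :
    ssat (Mstar M n) (AformS i) x ↔ 1 ≤ i ∧ x = .inr (i, 0) := by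
  rw [AformS, ssat_conj, chi_iff, ssat_ex]
  constructor
  · rintro ⟨⟨m, j, rfl, hj, hev, hm⟩, u, hrel, hu⟩
    rw [agnp_iff] at hu
    obtain ⟨m', j', rfl, hj'⟩ := hu
    rcases (succ_inr M n m j (Sum.inr (m', j'))).mp hrel with ⟨h1, he⟩ | ⟨h1, he⟩ | ⟨h1, he⟩ <;>
        simp only [Sum.inr.injEq, Prod.mk.injEq] at he
    · exfalso; omega
    · exfalso; omega
    · subst h1
      have hmi : m = i := by omega
      subst hmi
      exact ⟨by omega, rfl⟩
  · rintro ⟨hi, rfl⟩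
    refine ⟨⟨i, 0, rfl, by omega, by omega, hi⟩,
      .inr (i, 2 * i + 1), (succ_inr M n i 0 _).mpr (Or.inr (Or.inr ⟨rfl, rfl⟩)), ?_⟩
    rw [agnp_iff]
    exact ⟨i, 2 * i + 1, rfl, by omega⟩

theorem bform_iff {S : Type} (M : Kripke S) (n : ℕ) (i : ℕ) (x : S ⊕ ℕ × ℕ) :
    ssat (Mstar M n) (BformS i) x ↔
      1 ≤ i ∧ i ≤ n + 1 ∧ ∃ s, x = .inl s ∧ (i = n + 1 ∨ M.val i s) := by
  rw [BformS, ssat_ex]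
  constructor
  · rintro ⟨u, hrel, hu⟩
    rw [aform_iff] at hu
    obtain ⟨hi, rfl⟩ := hu
    rcases x with s | ⟨m, j⟩
    · rcases (succ_inl M n s (Sum.inr (i, 0))).mp hrel with ⟨t, he, -⟩ | ⟨i', he, h1, h2, h3⟩
      · exact absurd he (by simp)
      · obtain ⟨rfl, -⟩ : i = i' ∧ (0 : ℕ) = 0 := by simpa [Prod.ext_iff] using he
        exact ⟨hi, h2, s, rfl, h3⟩
    · exfalso
      rcases (succ_inr M n m j (Sum.inr (i, 0))).mp hrel with ⟨h1, he⟩ | ⟨h1, he⟩ | ⟨h1, he⟩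
      · obtain ⟨rfl, h⟩ : m = i ∧ j + 1 = 0 := by simpa [Prod.ext_iff] using he
        omega
      · simp only [Sum.inr.injEq, Prod.mk.injEq] at he
        omega
      · obtain ⟨rfl, h⟩ : m = i ∧ 2 * m + 1 = 0 := by simpa [Prod.ext_iff] using he
        omega
  · rintro ⟨h1, h2, s, rfl, h3⟩
    refine ⟨.inr (i, 0), (succ_inl M n s _).mpr (Or.inr ⟨i, rfl, h1, h2, h3⟩), ?_⟩
    rw [aform_iff]
    exact ⟨h1, rfl⟩
theorem forward_dir (n : ℕ) (φ : SF)
    (hvars : ∀ q, soccurs q φ → 1 ≤ q ∧ q ≤ n) :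
    ssatisfiable φ →
      ssatisfiable (sigmaS n (SF.conj (ThetaS (n + 1)) (srel (n + 1) φ))) := by
  rintro ⟨S, M, s₀, hs⟩
  set MS : Kripke (S ⊕ ℕ × ℕ) := Mstar M n with hMS
  set M₂ : Kripke (S ⊕ ℕ × ℕ) :=
    ⟨MS.rel, MS.serial, fun i x =>
      ssat MS (if 1 ≤ i ∧ i ≤ n + 1 then BformS i else .var i) x⟩ with hM₂
  have hsub := subst_s n MS M₂ rfl (fun i s => Iff.rfl)
  suffices h : ssat M₂ (SF.conj (ThetaS (n + 1)) (srel (n + 1) φ)) (.inl s₀) by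
    exact ⟨_, MS, .inl s₀, (hsub _ _).mp h⟩
  have hval2 : ∀ i x, 1 ≤ i → i ≤ n + 1 →
      (M₂.val i x ↔ ∃ s, x = .inl s ∧ (i = n + 1 ∨ M.val i s)) := by
    intro i x h1 h2
    show ssat MS (if 1 ≤ i ∧ i ≤ n + 1 then BformS i else .var i) x ↔ _
    rw [if_pos ⟨h1, h2⟩, bform_iff]
    constructor
    · rintro ⟨-, -, s, rfl, h3⟩
      exact ⟨s, rfl, h3⟩
    · rintro ⟨s, rfl, h3⟩
      exact ⟨h1, h2, s, rfl, h3⟩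
  have hrelMS : M₂.rel = starRel M n := rfl
  rw [ssat_conj]
  constructor
  · rw [ThetaS, ssat_conj, ssat_var]
    refine ⟨(hval2 (n + 1) _ (by omega) le_rfl).mpr ⟨s₀, rfl, Or.inl rfl⟩, ?_⟩
    rw [ssat_ag]
    intro t _
    rw [SF.iffc, ssat_conj, ssat_imp, ssat_imp, ssat_var]
    constructor
    · intro hex
      rw [ssat_ex] at hex
      obtain ⟨u, hrel, hq⟩ := hex
      rw [ssat_var] at hq
      obtain ⟨s, rfl, -⟩ := (hval2 (n + 1) u (by omega) le_rfl).mp hq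
      rcases t with t' | ⟨m, j⟩
      · exact (hval2 (n + 1) _ (by omega) le_rfl).mpr ⟨t', rfl, Or.inl rfl⟩
      · exact absurd hrel (by rw [hrelMS]; simp [starRel])
    · intro hq
      obtain ⟨s, rfl, -⟩ := (hval2 (n + 1) t (by omega) le_rfl).mp hq
      obtain ⟨t', ht'⟩ := M.serial s
      rw [ssat_ex]
      refine ⟨.inl t', ht', ?_⟩
      rw [ssat_var]
      exact (hval2 (n + 1) _ (by omega) le_rfl).mpr ⟨t', rfl, Or.inl rfl⟩
  · set Q : S ⊕ ℕ × ℕ → Prop := fun x => ∃ s, x = Sum.inl s with hQ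
    have hser : ∀ x, Q x → ∃ t, Q t ∧ M₂.rel x t := by
      rintro _ ⟨s, rfl⟩
      obtain ⟨t, ht⟩ := M.serial s
      exact ⟨.inl t, ⟨t, rfl⟩, ht⟩
    have hQq : ∀ x, Q x → M₂.val (n + 1) x := by
      rintro _ ⟨s, rfl⟩
      exact (hval2 (n + 1) _ (by omega) le_rfl).mpr ⟨s, rfl, Or.inl rfl⟩
    have hcl : ∀ x y, Q x → M₂.rel x y → M₂.val (n + 1) y → Q y := by
      intro x y _ _ hq
      obtain ⟨s, rfl, -⟩ := (hval2 (n + 1) y (by omega) le_rfl).mp hq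
      exact ⟨s, rfl⟩
    have hx₀ : Q (.inl s₀) := ⟨s₀, rfl⟩
    apply (rel_s M₂ (n + 1) Q hser hQq hcl φ _ hx₀).mp
    -- transfer satisfaction from M to the submodel via the embedding
    set N := subModel M₂ Q hser with hN
    set f : S → {x // Q x} := fun s => ⟨.inl s, s, rfl⟩ with hf
    have hfwd : ∀ s t, M.rel s t → N.rel (f s) (f t) := fun s t h => h
    have hback : ∀ s u, N.rel (f s) u → ∃ t, M.rel s t ∧ f t = u := by
      intro s u hrel
      obtain ⟨t, ht⟩ := u.2
      have : M₂.rel (.inl s) u.1 := hrel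
      rw [ht] at this
      exact ⟨t, this, Subtype.ext ht.symm⟩
    have hvv : ∀ i, soccurs i φ → ∀ s, M.val i s ↔ N.val i (f s) := by
      intro i hi s
      obtain ⟨h1, h2⟩ := hvars i hi
      show M.val i s ↔ M₂.val i (.inl s)
      rw [hval2 i _ h1 (by omega)]
      constructor
      · intro h
        exact ⟨s, rfl, Or.inr h⟩
      · rintro ⟨s', he, h3⟩
        obtain rfl : s = s' := by simpa using he
        rcases h3 with h3 | h3
        · omega
        · exact h3
    exact (iso_s M N f hfwd hback φ hvv s₀).mp hs

theorem ctlstar_single_variable_reduction' (n : ℕ) (φ : SF)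
    (hvars : ∀ q, soccurs q φ → 1 ≤ q ∧ q ≤ n) :
    ssatisfiable φ ↔
      ssatisfiable (sigmaS n (SF.conj (ThetaS (n + 1)) (srel (n + 1) φ))) :=
  ⟨forward_dir n φ hvars, backward_dir n φ⟩
/-- A CTL* formula φ in variables p₁,…,pₙ is satisfiable iff the single-variable
formula φ* = σ(Θ ∧ φ') is satisfiable, where σ(pᵢ) = Bᵢ = EX Aᵢ. -/
theorem ctlstar_single_variable_reduction (n : ℕ) (φ : SF)
    (hvars : ∀ q, soccurs q φ → 1 ≤ q ∧ q ≤ n) :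
    ssatisfiable φ ↔
      ssatisfiable (sigmaS n (SF.conj (ThetaS (n + 1)) (srel (n + 1) φ))) := by
  exact ⟨forward_dir n φ hvars, backward_dir n φ⟩
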